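/- For every n ≥ 1, the block densities satisfy the recurrence d_{n+1} = (2·d_n + δ_n·(1 − 2·d_n)) / (3 − 2·d_n), where d_n = c_n/L_n and δ_n = o_n/m_n are real numbers. -/

import Mathlib

/-- Generation operator: expand a run-length vector `R` starting with symbol `s`,
alternating between `s` and `4 - s` from run to run. -/
def G : List ℕ → ℕ → List ℕ
  | [], _ => []
  | r :: rs, s => List.replicate r s ++ G rs (4 - s)

/-- Pillar sequences: `P 1 = [3]`, `P (n+1) = G (P n) 3` for `n ≥ 1`. -/
def P : ℕ → List ℕ
  | 0 => []
  | 1 => [3]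
  | n + 2 => G (P (n + 1)) 3

/-- Block sequences: `B 1 = G [1,3,3,3,1] 1`, `B (n+1) = B n ++ P n ++ B n` for `n ≥ 1`. -/
def B : ℕ → List ℕ
  | 0 => []
  | 1 => G [1, 3, 3, 3, 1] 1
  | n + 2 => B (n + 1) ++ P (n + 1) ++ B (n + 1)

lemma G_length (R : List ℕ) (s : ℕ) : (G R s).length = R.sum := by
  induction R generalizing s with
  | nil => simp [G]
  | cons r rs ih => simp [G, ih, List.sum_cons]

lemma G_mem (R : List ℕ) (s : ℕ) (hs : s = 1 ∨ s = 3) :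
    ∀ x ∈ G R s, x = 1 ∨ x = 3 := by
  induction R generalizing s with
  | nil => simp [G]
  | cons r rs ih =>
    intro x hx
    simp only [G, List.mem_append, List.mem_replicate] at hx
    rcases hx with hx | hx
    · rcases hs with rfl | rfl
      · exact Or.inl hx.2
      · exact Or.inr hx.2
    · exact ih (4 - s) (by rcases hs with rfl | rfl <;> simp) x hx

lemma sum_count (l : List ℕ) (h : ∀ x ∈ l, x = 1 ∨ x = 3) :
    l.sum + 2 * l.count 1 = 3 * l.length := by
  induction l with
  | nil => simp
  | cons a t ih =>
    have ha := h a (by simp)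
    have ht := ih fun x hx => h x (List.mem_cons_of_mem a hx)
    rcases ha with rfl | rfl <;> simp [List.count_cons] <;> omega

lemma key : ∀ n, 1 ≤ n →
    (B n).length = 2 * (B n).count 1 + (P n).length
      ∧ 0 < (P n).length ∧ ∀ x ∈ P n, x = 1 ∨ x = 3 := by
  intro n hn
  induction n with
  | zero => omega
  | succ k ih =>
    rcases Nat.lt_or_ge k 1 with hk | hk
    · interval_cases k
      refine ⟨by decide, by decide, ?_⟩
      decide
    · obtain ⟨j, rfl⟩ : ∃ j, k = j + 1 := ⟨k - 1, by omega⟩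
      obtain ⟨hlen, hpos, hmem⟩ := ih (by omega)
      have hsum : (P (j + 1)).sum + 2 * (P (j + 1)).count 1 = 3 * (P (j + 1)).length :=
        sum_count _ hmem
      have hcnt : (P (j + 1)).count 1 ≤ (P (j + 1)).length := List.count_le_length
      have hB : B (j + 1 + 1) = B (j + 1) ++ P (j + 1) ++ B (j + 1) := rfl
      have hP : P (j + 1 + 1) = G (P (j + 1)) 3 := rfl
      have hPl : (P (j + 1 + 1)).length = (P (j + 1)).sum := by rw [hP, G_length]
      refine ⟨?_, ?_, ?_⟩
      · rw [hB]
        simp only [List.length_append, List.count_append]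
        omega
      · omega
      · rw [hP]; exact G_mem _ _ (Or.inr rfl)

/-- For every `n ≥ 1`, the block densities `d n = c n / L n` and pillar densities
`δ n = o n / m n` satisfy `d (n+1) = (2 d n + δ n (1 − 2 d n)) / (3 − 2 d n)`. -/
theorem density_recurrence :
    ∀ n : ℕ, 1 ≤ n →
      ((B (n + 1)).count 1 : ℝ) / ((B (n + 1)).length : ℝ) =
        (2 * (((B n).count 1 : ℝ) / ((B n).length : ℝ)) +
          (((P n).count 1 : ℝ) / ((P n).length : ℝ)) *
            (1 - 2 * (((B n).count 1 : ℝ) / ((B n).length : ℝ)))) /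
        (3 - 2 * (((B n).count 1 : ℝ) / ((B n).length : ℝ))) := by
  intro n hn
  obtain ⟨k, rfl⟩ : ∃ k, n = k + 1 := ⟨n - 1, by omega⟩
  obtain ⟨hlen, hpos, hmem⟩ := key (k + 1) (by omega)
  have hB : B (k + 2) = B (k + 1) ++ P (k + 1) ++ B (k + 1) := rfl
  have hC2 : (B (k + 2)).count 1 = 2 * (B (k + 1)).count 1 + (P (k + 1)).count 1 := by
    rw [hB]; simp only [List.count_append]; omega
  have hL2 : (B (k + 2)).length = 2 * (B (k + 1)).length + (P (k + 1)).length := by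
    rw [hB]; simp only [List.length_append]; omega
  set cN := (B (k + 1)).count 1 with hc
  set LN := (B (k + 1)).length with hLdef
  set oN := (P (k + 1)).count 1 with ho
  set mN := (P (k + 1)).length with hmdef
  have hLpos : 0 < LN := by omega
  rw [hC2, hL2]
  push_cast
  have hy : (0 : ℝ) < LN := by exact_mod_cast hLpos
  have hw : (0 : ℝ) < mN := by exact_mod_cast hpos
  have hweq : (mN : ℝ) = LN - 2 * cN := by
    have : LN = 2 * cN + mN := hlen
    push_cast [this]
    ring
  rw [hweq]
  have h1 : (LN : ℝ) - 2 * cN ≠ 0 := by rw [← hweq]; exact hw.ne'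
  have h2 : (3 : ℝ) * LN - 2 * cN ≠ 0 := by
    have : (3 : ℝ) * LN - 2 * cN = 2 * LN + mN := by rw [hweq]; ring
    rw [this]; positivity
  have h3 : (2 : ℝ) * LN + ((LN : ℝ) - 2 * cN) ≠ 0 := by
    rw [← hweq]; positivity
  rw [div_eq_div_iff h3 (by
    intro h
    apply h2
    have : (3 : ℝ) - 2 * (↑cN / ↑LN) = (3 * ↑LN - 2 * ↑cN) / ↑LN := by
      field_simp
    rw [this] at h
    rcases div_eq_zero_iff.mp h with h' | h'
    · exact h'
    · exact absurd h' hy.ne')]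
  field_simp
  ring_nf
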